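/- arXiv:1610.02940 — 2 statements merged into one kernel-verified Lean document; each statement's English description precedes it below -/
import Mathlib

section
/- Let L be a norm-closed linear subspace of X′′ containing I(e), and let K ⊆ L be a cone containing 0 such that z + n ∈ K whenever z ∈ K and n ∈ L with n ≤ 0. Then P(a;Q) = D(a;K) holds for every a ∈ L if and only if the norm closure K̄ of K equals K_Q ∩ L. Moreover, in that case there is dual attainment: for every a ∈ L there exists z_a ∈ K̄ with D(a;K)•I(e) + z_a = a. -/
open NormedSpace

/-- Positivity in the dual of an ordered normed space. -/
def dualNonneg (X : Type*) [NormedAddCommGroup X] [NormedSpace ℝ X] [Lattice X]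
    (η : StrongDual ℝ X) : Prop :=
  ∀ f : X, 0 ≤ f → 0 ≤ η f

/-- Positivity in the bidual. -/
def bidualNonneg (X : Type*) [NormedAddCommGroup X] [NormedSpace ℝ X] [Lattice X]
    (a : StrongDual ℝ (StrongDual ℝ X)) : Prop :=
  ∀ η : StrongDual ℝ X, dualNonneg X η → 0 ≤ a η

/-- The value of the primal problem `P(a; Q)`, as an extended real number. -/
noncomputable def Pval (X : Type*) [NormedAddCommGroup X] [NormedSpace ℝ X]
    (Q : Set (StrongDual ℝ X)) (a : StrongDual ℝ (StrongDual ℝ X)) : EReal :=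
  sSup {x : EReal | ∃ η ∈ Q, x = ((a η : ℝ) : EReal)}

/-- The value of the dual problem `D(a; K)` (with `inf ∅ = +∞`). -/
noncomputable def Dval (X : Type*) [NormedAddCommGroup X] [NormedSpace ℝ X]
    (e : X) (K : Set (StrongDual ℝ (StrongDual ℝ X))) (a : StrongDual ℝ (StrongDual ℝ X)) : EReal :=
  sInf {x : EReal | ∃ c : ℝ, x = (c : EReal) ∧
    ∃ z ∈ K, c • (inclusionInDoubleDual ℝ X e) + z = a}

section Aux

variable {X : Type*} [NormedAddCommGroup X] [Lattice X] [IsOrderedAddMonoid X] [HasSolidNorm X] [NormedSpace ℝ X]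

/-- A positive normalized functional is dominated by the norm. -/
lemma aux_le_norm (e : X) (he : 0 ≤ e)
    (hnorm : ∀ f : X, ‖f‖ = sInf {c : ℝ | -(c • e) ≤ f ∧ f ≤ c • e})
    (η : StrongDual ℝ X) (hη : dualNonneg X η) (hη1 : η e = 1) (f : X) :
    η f ≤ ‖f‖ := by
  set S := {c : ℝ | -(c • e) ≤ f ∧ f ≤ c • e} with hS
  have hSne : S.Nonempty := by
    by_contra hemp
    have h0 : ‖f‖ = 0 := by
      rw [hnorm f, ← hS, Set.not_nonempty_iff_eq_empty.mp hemp, Real.sInf_empty]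
    have hf0 : f = 0 := norm_eq_zero.mp h0
    exact hemp ⟨0, by simp [hS, hf0]⟩
  have hSbdd : BddBelow S := by
    refine ⟨0, fun c hc => ?_⟩
    have h1 : -(c • e) ≤ c • e := hc.1.trans hc.2
    have h2 : (0 : X) ≤ c • e + c • e := by
      have := sub_nonneg.mpr h1
      rwa [sub_neg_eq_add] at this
    have h3 := hη _ h2
    rw [map_add, map_smul, smul_eq_mul, hη1] at h3
    linarith
  refine le_of_forall_pos_le_add fun ε hε => ?_
  have hlt : sInf S < ‖f‖ + ε := by rw [← hnorm f]; linarith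
  obtain ⟨c, hcS, hclt⟩ := (csInf_lt_iff hSbdd hSne).mp hlt
  have h4 := hη _ (sub_nonneg.mpr hcS.2)
  rw [map_sub, map_smul, smul_eq_mul, hη1] at h4
  linarith

lemma aux_opnorm (e : X) (he : 0 ≤ e)
    (hnorm : ∀ f : X, ‖f‖ = sInf {c : ℝ | -(c • e) ≤ f ∧ f ≤ c • e})
    (η : StrongDual ℝ X) (hη : dualNonneg X η) (hη1 : η e = 1) :
    ‖η‖ ≤ 1 := by
  refine ContinuousLinearMap.opNorm_le_bound η zero_le_one fun f => ?_
  rw [Real.norm_eq_abs, one_mul]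
  refine abs_le.mpr ⟨?_, aux_le_norm e he hnorm η hη hη1 f⟩
  have h := aux_le_norm e he hnorm η hη hη1 (-f)
  rw [map_neg, norm_neg] at h
  linarith

lemma aux_bidual (e : X) (he : 0 ≤ e)
    (hbnorm : ∀ a : StrongDual ℝ (StrongDual ℝ X), ‖a‖ = sInf {c : ℝ |
      bidualNonneg X (a + c • inclusionInDoubleDual ℝ X e) ∧
      bidualNonneg X (c • inclusionInDoubleDual ℝ X e - a)})
    (η₀ : StrongDual ℝ X) (hη₀ : dualNonneg X η₀) (hη₀1 : η₀ e = 1)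
    (w : StrongDual ℝ (StrongDual ℝ X)) (ε : ℝ) (hw : ‖w‖ < ε) :
    bidualNonneg X (ε • inclusionInDoubleDual ℝ X e - w) := by
  set S := {c : ℝ | bidualNonneg X (w + c • inclusionInDoubleDual ℝ X e) ∧
      bidualNonneg X (c • inclusionInDoubleDual ℝ X e - w)} with hS
  have hwS : ‖w‖ = sInf S := hbnorm w
  have hSne : S.Nonempty := by
    by_contra hemp
    have h0 : w = 0 := (norm_eq_zero (E := StrongDual ℝ (StrongDual ℝ X))).mp
      (show ‖w‖ = 0 by rw [hwS, Set.not_nonempty_iff_eq_empty.mp hemp, Real.sInf_empty])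
    refine hemp ⟨1, ?_, ?_⟩ <;>
      · intro η hη
        simpa [h0, dual_def] using hη e he
  have hSbdd : BddBelow S := by
    refine ⟨0, fun c hc => ?_⟩
    have h1 := hc.1 η₀ hη₀
    have h2 := hc.2 η₀ hη₀
    simp only [ContinuousLinearMap.add_apply, ContinuousLinearMap.sub_apply,
      ContinuousLinearMap.smul_apply, dual_def, hη₀1, smul_eq_mul, mul_one] at h1 h2
    linarith
  have hlt : sInf S < ε := by rw [← hwS]; exact hw
  obtain ⟨c, hcS, hclt⟩ := (csInf_lt_iff hSbdd hSne).mp hlt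
  intro η hη
  have h2 := hcS.2 η hη
  have hηe : 0 ≤ η e := hη e he
  simp only [ContinuousLinearMap.sub_apply, ContinuousLinearMap.smul_apply,
    dual_def, smul_eq_mul] at h2 ⊢
  nlinarith [mul_nonneg (sub_nonneg.mpr hclt.le) hηe]

set_option maxHeartbeats 1000000 in
/-- Core strong-duality lemma, assuming `closure K = K_Q ∩ L`. -/
lemma aux_core (e : X) (he : 0 ≤ e)
    (hnorm : ∀ f : X, ‖f‖ = sInf {c : ℝ | -(c • e) ≤ f ∧ f ≤ c • e})
    (hbnorm : ∀ a : StrongDual ℝ (StrongDual ℝ X), ‖a‖ = sInf {c : ℝ |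
      bidualNonneg X (a + c • inclusionInDoubleDual ℝ X e) ∧
      bidualNonneg X (c • inclusionInDoubleDual ℝ X e - a)})
    (Q : Set (StrongDual ℝ X)) (hQne : Q.Nonempty)
    (hQsub : ∀ η ∈ Q, dualNonneg X η ∧ η e = 1)
    (L : Submodule ℝ (StrongDual ℝ (StrongDual ℝ X))) (heL : inclusionInDoubleDual ℝ X e ∈ L)
    (K : Set (StrongDual ℝ (StrongDual ℝ X))) (hKL : K ⊆ (L : Set (StrongDual ℝ (StrongDual ℝ X))))
    (hKmono : ∀ z ∈ K, ∀ n ∈ L, bidualNonneg X (-n) → z + n ∈ K)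
    (hcl : closure K = {z : StrongDual ℝ (StrongDual ℝ X) | ∀ η ∈ Q, z η ≤ 0} ∩ L)
    (a : StrongDual ℝ (StrongDual ℝ X)) (ha : a ∈ L) :
    ∃ p : ℝ, Pval X Q a = (p : EReal) ∧ Dval X e K a = (p : EReal) ∧
      a - p • inclusionInDoubleDual ℝ X e ∈ closure K := by
  obtain ⟨η₀, hη₀Q⟩ := hQne
  obtain ⟨hη₀, hη₀1⟩ := hQsub η₀ hη₀Q
  set S := (fun η : StrongDual ℝ X => a η) '' Q with hSdef
  have hSne : S.Nonempty := ⟨a η₀, η₀, hη₀Q, rfl⟩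
  have hSbdd : BddAbove S := by
    refine ⟨‖a‖, ?_⟩
    rintro s ⟨η, hηQ, rfl⟩
    obtain ⟨hη, hη1⟩ := hQsub η hηQ
    have h1 : ‖a η‖ ≤ ‖a‖ * ‖η‖ := a.le_opNorm η
    have h2 : ‖η‖ ≤ 1 := aux_opnorm e he hnorm η hη hη1
    have h3 : a η ≤ ‖a η‖ := le_abs_self _
    nlinarith [norm_nonneg a]
  set p := sSup S with hp
  have hmemp : ∀ η ∈ Q, a η ≤ p := fun η hη => le_csSup hSbdd ⟨η, hη, rfl⟩
  have hPval : Pval X Q a = (p : EReal) := by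
    apply le_antisymm
    · unfold Pval
      apply sSup_le
      rintro x ⟨η, hη, rfl⟩
      exact EReal.coe_le_coe_iff.mpr (hmemp η hη)
    · by_contra hlt
      push_neg at hlt
      obtain ⟨r, hr1, hr2⟩ := EReal.exists_between_coe_real hlt
      obtain ⟨s, hsS, hrs⟩ := exists_lt_of_lt_csSup hSne (EReal.coe_lt_coe_iff.mp hr2)
      obtain ⟨η, hη, rfl⟩ := hsS
      have h5 : ((a η : ℝ) : EReal) ≤ Pval X Q a := by
        unfold Pval; exact le_sSup ⟨η, hη, rfl⟩
      have h6 := h5.trans_lt hr1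
      exact absurd (EReal.coe_lt_coe_iff.mp h6) (not_lt.mpr hrs.le)
  have hweak : (p : EReal) ≤ Dval X e K a := by
    unfold Dval
    apply le_sInf
    rintro x ⟨c, rfl, z, hzK, hza⟩
    refine EReal.coe_le_coe_iff.mpr (csSup_le hSne ?_)
    rintro s ⟨η, hηQ, rfl⟩
    obtain ⟨hη, hη1⟩ := hQsub η hηQ
    have hzneg : z η ≤ 0 := by
      have hz : z ∈ closure K := subset_closure hzK
      rw [hcl] at hz
      exact hz.1 η hηQ
    have haη : a η = c * η e + z η := by
      rw [← hza]
      simp [dual_def]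
    show a η ≤ c
    rw [haη, hη1]
    linarith
  have hbK : a - p • inclusionInDoubleDual ℝ X e ∈ closure K := by
    rw [hcl]
    refine ⟨fun η hηQ => ?_, Submodule.sub_mem (M := StrongDual ℝ (StrongDual ℝ X)) L ha (Submodule.smul_mem L p heL)⟩
    obtain ⟨hη, hη1⟩ := hQsub η hηQ
    have h7 : (a - p • inclusionInDoubleDual ℝ X e) η = a η - p := by
      simp [dual_def, hη1]
    rw [h7]
    linarith [hmemp η hηQ]
  have hDle : ∀ ε : ℝ, 0 < ε → Dval X e K a ≤ ((p + ε : ℝ) : EReal) := by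
    intro ε hε
    obtain ⟨z', hz'K, hdist⟩ := (Metric.mem_closure_iff (α := StrongDual ℝ (StrongDual ℝ X))).mp hbK ε hε
    have hwnorm : ‖(a - p • inclusionInDoubleDual ℝ X e) - z'‖ < ε := by
      rwa [← dist_eq_norm (E := StrongDual ℝ (StrongDual ℝ X))]
    have hpos := aux_bidual e he hbnorm η₀ hη₀ hη₀1
      ((a - p • inclusionInDoubleDual ℝ X e) - z') ε hwnorm
    have hn : z' + ((a - p • inclusionInDoubleDual ℝ X e - z')
        - ε • inclusionInDoubleDual ℝ X e) ∈ K := by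
      refine hKmono z' hz'K _ ?_ ?_
      · exact Submodule.sub_mem (M := StrongDual ℝ (StrongDual ℝ X)) L (Submodule.sub_mem (M := StrongDual ℝ (StrongDual ℝ X)) L (Submodule.sub_mem (M := StrongDual ℝ (StrongDual ℝ X)) L ha (Submodule.smul_mem L p heL)) (hKL hz'K))
          (Submodule.smul_mem L ε heL)
      · have hneg : -((a - p • inclusionInDoubleDual ℝ X e - z')
            - ε • inclusionInDoubleDual ℝ X e)
            = ε • inclusionInDoubleDual ℝ X e
              - (a - p • inclusionInDoubleDual ℝ X e - z') := by abel
        rw [hneg]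
        exact hpos
    have heq : (p + ε) • inclusionInDoubleDual ℝ X e
        + (z' + ((a - p • inclusionInDoubleDual ℝ X e - z')
          - ε • inclusionInDoubleDual ℝ X e)) = a := by
      rw [add_smul]; abel
    unfold Dval
    exact sInf_le ⟨p + ε, rfl, _, hn, heq⟩
  have hDval : Dval X e K a = (p : EReal) := by
    refine le_antisymm ?_ hweak
    by_contra hlt
    push_neg at hlt
    obtain ⟨r, hr1, hr2⟩ := EReal.exists_between_coe_real hlt
    have hpr : p < r := EReal.coe_lt_coe_iff.mp hr1
    have h8 := hDle (r - p) (by linarith)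
    have h9 : p + (r - p) = r := by ring
    rw [h9] at h8
    exact absurd h8 (not_le.mpr hr2)
  exact ⟨p, hPval, hDval, hbK⟩

end Aux

set_option maxHeartbeats 1000000 in
theorem stmt2
    (X : Type*) [NormedAddCommGroup X] [Lattice X] [IsOrderedAddMonoid X] [HasSolidNorm X] [NormedSpace ℝ X] [CompleteSpace X]
    -- `e` is a positive order unit inducing the lattice norm of the AM-space `X`
    (e : X) (he : 0 ≤ e)
    (hnorm : ∀ f : X, ‖f‖ = sInf {c : ℝ | -(c • e) ≤ f ∧ f ≤ c • e})
    (hbnorm : ∀ a : StrongDual ℝ (StrongDual ℝ X), ‖a‖ = sInf {c : ℝ |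
      bidualNonneg X (a + c • inclusionInDoubleDual ℝ X e) ∧
      bidualNonneg X (c • inclusionInDoubleDual ℝ X e - a)})
    -- standing assumption on `Q`
    (H : Submodule ℝ X) (hH : IsClosed (H : Set X))
    (Q : Set (StrongDual ℝ X)) (hQne : Q.Nonempty) (hQcl : IsClosed Q) (hQconv : Convex ℝ Q)
    (hQ : Q = {η : StrongDual ℝ X | ∀ h ∈ H, η h = 0} ∩
      {η : StrongDual ℝ X | dualNonneg X η ∧ η e = 1})
    -- `L` is a norm-closed subspace of the bidual containing `I(e)`
    (L : Submodule ℝ (StrongDual ℝ (StrongDual ℝ X))) (hL : IsClosed (L : Set (StrongDual ℝ (StrongDual ℝ X))))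
    (heL : inclusionInDoubleDual ℝ X e ∈ L)
    -- `K ⊆ L` is a cone containing `0`, stable under adding nonpositive elements of `L`
    (K : Set (StrongDual ℝ (StrongDual ℝ X))) (hKL : K ⊆ (L : Set (StrongDual ℝ (StrongDual ℝ X))))
    (hK0 : (0 : StrongDual ℝ (StrongDual ℝ X)) ∈ K)
    (hKcone : ∀ z ∈ K, ∀ t : ℝ, 0 ≤ t → t • z ∈ K)
    (hKmono : ∀ z ∈ K, ∀ n ∈ L, bidualNonneg X (-n) → z + n ∈ K) :
    ((∀ a ∈ L, Pval X Q a = Dval X e K a) ↔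
      closure K = {z : StrongDual ℝ (StrongDual ℝ X) | ∀ η ∈ Q, z η ≤ 0} ∩ L) ∧
    ((∀ a ∈ L, Pval X Q a = Dval X e K a) →
      ∀ a ∈ L, ∃ za ∈ closure K, ∃ d : ℝ, (d : EReal) = Dval X e K a ∧
        d • inclusionInDoubleDual ℝ X e + za = a) := by
  have hQsub : ∀ η ∈ Q, dualNonneg X η ∧ η e = 1 := by
    intro η hη
    rw [hQ] at hη
    exact hη.2
  have hKQclosed : IsClosed {z : StrongDual ℝ (StrongDual ℝ X) | ∀ η ∈ Q, z η ≤ 0} := by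
    have hset : {z : StrongDual ℝ (StrongDual ℝ X) | ∀ η ∈ Q, z η ≤ 0}
        = ⋂ η ∈ Q, {z : StrongDual ℝ (StrongDual ℝ X) | z η ≤ 0} := by
      ext z; simp
    rw [hset]
    refine isClosed_biInter fun η _ => isClosed_le ?_ continuous_const
    exact (inclusionInDoubleDual ℝ (StrongDual ℝ X) η).continuous
  have hfwd : (∀ a ∈ L, Pval X Q a = Dval X e K a) →
      closure K = {z : StrongDual ℝ (StrongDual ℝ X) | ∀ η ∈ Q, z η ≤ 0} ∩ L := by
    intro hdual
    refine Set.Subset.antisymm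
      (closure_minimal (fun z hz => ⟨fun η hηQ => ?_, hKL hz⟩) (hKQclosed.inter hL)) ?_
    · have hD0 : Dval X e K z ≤ ((0 : ℝ) : EReal) := by
        unfold Dval
        exact sInf_le ⟨0, rfl, z, hz, by rw [zero_smul, zero_add]⟩
      have hP0 : Pval X Q z ≤ ((0 : ℝ) : EReal) := (hdual z (hKL hz)) ▸ hD0
      have hle : ((z η : ℝ) : EReal) ≤ Pval X Q z := by
        unfold Pval; exact le_sSup ⟨η, hηQ, rfl⟩
      exact EReal.coe_le_coe_iff.mp (le_trans hle hP0)
    · rintro z ⟨hzQ, hzL⟩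
      refine (Metric.mem_closure_iff (α := StrongDual ℝ (StrongDual ℝ X))).mpr ?_
      intro ε hε
      have hMpos : (0 : ℝ) < ‖inclusionInDoubleDual ℝ X e‖ + 1 := by positivity
      have hδ : 0 < ε / (‖inclusionInDoubleDual ℝ X e‖ + 1) := div_pos hε hMpos
      have hP0 : Pval X Q z ≤ ((0 : ℝ) : EReal) := by
        unfold Pval
        apply sSup_le
        rintro x ⟨η, hηQ, rfl⟩
        exact EReal.coe_le_coe_iff.mpr (hzQ η hηQ)
      have hD0' : Dval X e K z ≤ ((0 : ℝ) : EReal) := by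
        rw [← hdual z hzL]; exact hP0
      have hD : Dval X e K z
          < ((ε / (‖inclusionInDoubleDual ℝ X e‖ + 1) : ℝ) : EReal) :=
        lt_of_le_of_lt hD0' (EReal.coe_lt_coe_iff.mpr hδ)
      unfold Dval at hD
      obtain ⟨x, hx, hxlt⟩ := sInf_lt_iff.mp hD
      obtain ⟨c, rfl, zc, hzcK, hzc⟩ := hx
      have hcδ : c < ε / (‖inclusionInDoubleDual ℝ X e‖ + 1) :=
        EReal.coe_lt_coe_iff.mp hxlt
      by_cases hc : c ≤ 0
      · refine ⟨z, ?_, by simpa using hε⟩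
        have hzeq : z = zc + c • inclusionInDoubleDual ℝ X e := by
          rw [← hzc]; abel
        rw [hzeq]
        refine hKmono zc hzcK _ (Submodule.smul_mem L c heL) ?_
        intro η hη
        have h2 : (-(c • inclusionInDoubleDual ℝ X e)) η = -c * η e := by
          simp [dual_def]
        rw [h2]
        exact mul_nonneg (by linarith) (hη e he)
      · push_neg at hc
        refine ⟨zc, hzcK, ?_⟩
        have hzeq : z - zc = c • inclusionInDoubleDual ℝ X e := by
          rw [← hzc]; abel
        rw [dist_eq_norm (E := StrongDual ℝ (StrongDual ℝ X)), hzeq, @norm_smul ℝ (StrongDual ℝ (StrongDual ℝ X)) _ _ _ NormedSpace.toNormSMulClass c (inclusionInDoubleDual ℝ X e), Real.norm_eq_abs, abs_of_pos hc]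
        have h3 : c * (‖inclusionInDoubleDual ℝ X e‖ + 1) < ε :=
          (lt_div_iff₀ hMpos).mp hcδ
        have h4 : c * ‖inclusionInDoubleDual ℝ X e‖ + c
            = c * (‖inclusionInDoubleDual ℝ X e‖ + 1) := by ring
        linarith
  constructor
  · constructor
    · exact hfwd
    · intro hcl a ha
      obtain ⟨p, hP, hD, _⟩ := aux_core e he hnorm hbnorm Q hQne hQsub L heL K hKL
        hKmono hcl a ha
      exact hP.trans hD.symm
  · intro hdual a ha
    have hcl := hfwd hdual
    obtain ⟨p, hP, hD, hbK⟩ := aux_core e he hnorm hbnorm Q hQne hQsub L heL K hKL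
      hKmono hcl a ha
    exact ⟨a - p • inclusionInDoubleDual ℝ X e, hbK, p, hD.symm, by abel⟩
end

section
/- The following are equivalent: (1) there exists a linear subspace 𝔥 of X′′ such that P(a;Q) = D(a; 𝔥 + X′′_−) for every a ∈ X′′; (2) 𝔄_Q = K_Q; (3) P(a;Q) = D(a; 𝔄_Q) for every a ∈ X′′; (4) the intersection of the weak* closure of J(Â_Q) in X′′′ with the positive cone of X′′′ equals the weak* closure of J(C_Q) in X′′′, where J : X′ → X′′′ is the canonical embedding. Moreover, when (1) holds, 𝔥 is contained in Ĥ_Q and the norm closure of 𝔥 + X′′_− equals K_Q. -/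
open NormedSpace Pointwise

/-- Positivity in the tridual `X′′′`. -/
def tridualNonneg (X : Type*) [NormedAddCommGroup X] [NormedSpace ℝ X] [Lattice X]
    (ℵ : StrongDual ℝ (StrongDual ℝ (StrongDual ℝ X))) : Prop :=
  ∀ a : StrongDual ℝ (StrongDual ℝ X), bidualNonneg X a → 0 ≤ ℵ a

/-- The weak* closure of a subset of the dual of a normed space `Z`. -/
noncomputable def wstarClosure (Z : Type*) [NormedAddCommGroup Z] [NormedSpace ℝ Z]
    (S : Set (StrongDual ℝ Z)) : Set (StrongDual ℝ Z) :=
  StrongDual.toWeakDual ⁻¹' closure (StrongDual.toWeakDual '' S)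

/- ### Auxiliary lemmas -/

/-- Every continuous linear functional on a weak* dual is an evaluation. -/
lemma aux_exists_eval (Z : Type*) [NormedAddCommGroup Z] [NormedSpace ℝ Z]
    (φ : WeakDual ℝ Z →L[ℝ] ℝ) : ∃ z : Z, ∀ ℵ : WeakDual ℝ Z, φ ℵ = ℵ z := by
  classical
  set B := topDualPairing ℝ Z with hB
  have hws : WithSeminorms (LinearMap.toSeminormFamily B : Z → Seminorm ℝ (WeakBilin B)) :=
    LinearMap.weakBilin_withSeminorms B
  let φ' : WeakBilin B →ₗ[ℝ] ℝ := (φ : WeakDual ℝ Z →ₗ[ℝ] ℝ)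
  let q : Seminorm ℝ (WeakBilin B) := (normSeminorm ℝ ℝ).comp φ'
  have hqc : Continuous q := continuous_norm.comp φ.continuous
  obtain ⟨s, C, hC, hle⟩ := Seminorm.bound_of_continuous hws q hqc
  have hker : (⨅ i : s, LinearMap.ker (B.flip (i : Z))) ≤ LinearMap.ker φ' := by
    intro x hx
    simp only [Submodule.mem_iInf, LinearMap.mem_ker] at hx ⊢
    have h0 : (s.sup (LinearMap.toSeminormFamily B)) x ≤ 0 := by
      apply Seminorm.finset_sup_apply_le le_rfl
      intro i hi
      have h1 := hx ⟨i, hi⟩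
      have : B x i = 0 := h1
      simp [LinearMap.toSeminormFamily_apply, this]
    have hqx : q x ≤ 0 := by
      calc q x ≤ (C • s.sup (LinearMap.toSeminormFamily B)) x := hle x
        _ = (C : ℝ) * (s.sup (LinearMap.toSeminormFamily B)) x := by
            simp [NNReal.smul_def, smul_eq_mul]
        _ ≤ 0 := by nlinarith [h0, C.coe_nonneg]
    have : ‖φ' x‖ ≤ 0 := hqx
    show φ' x = 0; exact norm_le_zero_iff.mp this
  have hmem := mem_span_of_iInf_ker_le_ker (L := fun i : s => B.flip (i : Z)) (K := φ') hker
  have hsub : Submodule.span ℝ (Set.range fun i : s => B.flip (i : Z))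
      ≤ LinearMap.range B.flip := by
    rw [Submodule.span_le]
    rintro - ⟨i, rfl⟩
    exact ⟨(i : Z), rfl⟩
  obtain ⟨z, hz⟩ := hsub hmem
  refine ⟨z, fun ℵ => ?_⟩
  have := congrArg (fun (L : WeakBilin B →ₗ[ℝ] ℝ) => L ℵ) hz
  exact this.symm

instance aux_wkLCS (Z : Type*) [NormedAddCommGroup Z] [NormedSpace ℝ Z] :
    LocallyConvexSpace ℝ (WeakDual ℝ Z) :=
  WeakBilin.locallyConvexSpace (B := topDualPairing ℝ Z)

instance aux_dd_contAdd (X : Type*) [NormedAddCommGroup X] [NormedSpace ℝ X] :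
    ContinuousAdd (StrongDual ℝ (StrongDual ℝ X)) := by
  exact @IsTopologicalAddGroup.toContinuousAdd (StrongDual ℝ (StrongDual ℝ X)) _ _
    (SeminormedAddCommGroup.toIsTopologicalAddGroup (E := StrongDual ℝ (StrongDual ℝ X)))

instance aux_dd_contSub (X : Type*) [NormedAddCommGroup X] [NormedSpace ℝ X] :
    ContinuousSub (StrongDual ℝ (StrongDual ℝ X)) := by
  exact @IsTopologicalAddGroup.to_continuousSub (StrongDual ℝ (StrongDual ℝ X)) _ _
    (SeminormedAddCommGroup.toIsTopologicalAddGroup (E := StrongDual ℝ (StrongDual ℝ X)))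

/-- Separation of a point from a weak*-closed convex set by an element of the predual. -/
lemma aux_wstar_separate (Z : Type*) [NormedAddCommGroup Z] [NormedSpace ℝ Z]
    (s : Set (StrongDual ℝ Z)) (hconv : Convex ℝ s) (x : StrongDual ℝ Z)
    (hx : x ∉ wstarClosure Z s) :
    ∃ z : Z, ∃ u : ℝ, (∀ b ∈ s, b z < u) ∧ u < x z := by
  have hcl : IsClosed (closure (StrongDual.toWeakDual '' s)) := isClosed_closure
  have hconv' : Convex ℝ (closure (StrongDual.toWeakDual '' s)) := by
    apply Convex.closure
    exact hconv.linear_image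
      (StrongDual.toWeakDual : StrongDual ℝ Z ≃ₗ[ℝ] WeakDual ℝ Z).toLinearMap
  have hx' : (StrongDual.toWeakDual x : WeakDual ℝ Z) ∉
      closure (StrongDual.toWeakDual '' s) := hx
  obtain ⟨f, u, hfs, hfx⟩ := geometric_hahn_banach_closed_point hconv' hcl hx'
  obtain ⟨z, hz⟩ := aux_exists_eval Z f
  refine ⟨z, u, fun b hb => ?_, ?_⟩
  · have := hfs _ (subset_closure (Set.mem_image_of_mem _ hb))
    rwa [hz] at this
  · have := hfx
    rwa [hz] at this

/-- A set is contained in a weak* closure of its image. -/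
lemma aux_subset_wstarClosure (Z : Type*) [NormedAddCommGroup Z] [NormedSpace ℝ Z]
    (s : Set (StrongDual ℝ Z)) : s ⊆ wstarClosure Z s := by
  intro x hx
  show (StrongDual.toWeakDual x : WeakDual ℝ Z) ∈ closure _
  exact subset_closure (Set.mem_image_of_mem _ hx)

/-- Membership in the weak*-closure transferred through closed conditions. -/
lemma aux_wstarClosure_subset (Z : Type*) [NormedAddCommGroup Z] [NormedSpace ℝ Z]
    (s : Set (StrongDual ℝ Z)) (P : StrongDual ℝ Z → Prop)
    (hP : IsClosed {b : WeakDual ℝ Z | P (StrongDual.toWeakDual.symm b)})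
    (hsP : ∀ x ∈ s, P x) : ∀ x ∈ wstarClosure Z s, P x := by
  intro x hx
  have : closure (StrongDual.toWeakDual '' s) ⊆
      {b : WeakDual ℝ Z | P (StrongDual.toWeakDual.symm b)} := by
    apply closure_minimal _ hP
    rintro - ⟨y, hy, rfl⟩
    simpa using hsP y hy
  exact this hx

set_option maxHeartbeats 1000000 in
theorem stmt4
    (X : Type*) [NormedAddCommGroup X] [Lattice X] [IsOrderedAddMonoid X] [HasSolidNorm X]
    [NormedSpace ℝ X] [CompleteSpace X]
    -- `e` is a positive order unit inducing the lattice norm of the AM-space `X`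
    (e : X) (he : 0 ≤ e)
    (hnorm : ∀ f : X, ‖f‖ = sInf {c : ℝ | -(c • e) ≤ f ∧ f ≤ c • e})
    (hbnorm : ∀ a : StrongDual ℝ (StrongDual ℝ X), ‖a‖ = sInf {c : ℝ |
      bidualNonneg X (a + c • inclusionInDoubleDual ℝ X e) ∧
      bidualNonneg X (c • inclusionInDoubleDual ℝ X e - a)})
    -- standing assumption on `Q`
    (H : Submodule ℝ X) (hH : IsClosed (H : Set X))
    (Q : Set (StrongDual ℝ X)) (hQne : Q.Nonempty) (hQcl : IsClosed Q) (hQconv : Convex ℝ Q)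
    (hQ : Q = {η : StrongDual ℝ X | ∀ h ∈ H, η h = 0} ∩
      {η : StrongDual ℝ X | dualNonneg X η ∧ η e = 1})
    -- the derived sets
    (CQ : Set (StrongDual ℝ X)) (hCQ : CQ = {ξ : StrongDual ℝ X | ∃ η ∈ Q, ∃ t : ℝ, 0 ≤ t ∧ ξ = t • η})
    (AhatQ : Set (StrongDual ℝ X)) (hAhatQ : AhatQ = CQ - CQ)
    (HhatQ : Set (StrongDual ℝ (StrongDual ℝ X)))
    (hHhatQ : HhatQ = {a : StrongDual ℝ (StrongDual ℝ X) | ∀ η ∈ AhatQ, a η = 0})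
    (negSet : Set (StrongDual ℝ (StrongDual ℝ X)))
    (hnegSet : negSet = {a : StrongDual ℝ (StrongDual ℝ X) | bidualNonneg X (-a)})
    (AQ : Set (StrongDual ℝ (StrongDual ℝ X))) (hAQ : AQ = closure (HhatQ + negSet))
    (KQ : Set (StrongDual ℝ (StrongDual ℝ X)))
    (hKQ : KQ = {z : StrongDual ℝ (StrongDual ℝ X) | ∀ η ∈ Q, z η ≤ 0}) :
    -- (1) ↔ (2)
    (((∃ 𝔥 : Submodule ℝ (StrongDual ℝ (StrongDual ℝ X)),
        ∀ a : StrongDual ℝ (StrongDual ℝ X),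
          Pval X Q a = Dval X e ((𝔥 : Set (StrongDual ℝ (StrongDual ℝ X))) + negSet) a) ↔
      AQ = KQ) ∧
    -- (2) ↔ (3)
    ((AQ = KQ) ↔
      ∀ a : StrongDual ℝ (StrongDual ℝ X), Pval X Q a = Dval X e AQ a) ∧
    -- (3) ↔ (4)
    ((∀ a : StrongDual ℝ (StrongDual ℝ X), Pval X Q a = Dval X e AQ a) ↔
      wstarClosure (StrongDual ℝ (StrongDual ℝ X))
          (inclusionInDoubleDual ℝ (StrongDual ℝ X) '' AhatQ) ∩
          {ℵ : StrongDual ℝ (StrongDual ℝ (StrongDual ℝ X)) | tridualNonneg X ℵ} =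
        wstarClosure (StrongDual ℝ (StrongDual ℝ X))
          (inclusionInDoubleDual ℝ (StrongDual ℝ X) '' CQ))) ∧
    -- moreover
    (∀ 𝔥 : Submodule ℝ (StrongDual ℝ (StrongDual ℝ X)),
      (∀ a : StrongDual ℝ (StrongDual ℝ X),
          Pval X Q a = Dval X e ((𝔥 : Set (StrongDual ℝ (StrongDual ℝ X))) + negSet) a) →
        (𝔥 : Set (StrongDual ℝ (StrongDual ℝ X))) ⊆ HhatQ ∧
        closure ((𝔥 : Set (StrongDual ℝ (StrongDual ℝ X))) + negSet) = KQ) := by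
  classical
  obtain ⟨η₀, hη₀⟩ := hQne
  set e'' : StrongDual ℝ (StrongDual ℝ X) := inclusionInDoubleDual ℝ X e with he''
  have hQmem : ∀ η ∈ Q, (∀ h ∈ H, η h = 0) ∧ dualNonneg X η ∧ η e = 1 := by
    intro η hη; rw [hQ] at hη; exact ⟨hη.1, hη.2.1, hη.2.2⟩
  have hepos : bidualNonneg X e'' := by
    intro η hη
    simpa [he'', NormedSpace.dual_def] using hη e he
  -- bidualNonneg closure properties
  have bidual_add : ∀ a b : StrongDual ℝ (StrongDual ℝ X), bidualNonneg X a → bidualNonneg X b →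
      bidualNonneg X (a + b) := by
    intro a b ha hb η hη
    have := add_nonneg (ha η hη) (hb η hη)
    simpa using this
  have bidual_smul : ∀ (t : ℝ) (a : StrongDual ℝ (StrongDual ℝ X)), 0 ≤ t → bidualNonneg X a →
      bidualNonneg X (t • a) := by
    intro t a ht ha η hη
    have := mul_nonneg ht (ha η hη)
    simpa using this
  -- negSet properties
  have hneg_iff : ∀ z : StrongDual ℝ (StrongDual ℝ X), z ∈ negSet ↔ bidualNonneg X (-z) := by
    intro z; rw [hnegSet]; rfl
  have hneg0 : (0 : StrongDual ℝ (StrongDual ℝ X)) ∈ negSet := by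
    rw [hneg_iff]; intro η hη; simp
  have hnegadd : ∀ z₁ ∈ negSet, ∀ z₂ ∈ negSet, z₁ + z₂ ∈ negSet := by
    intro z₁ h₁ z₂ h₂
    rw [hneg_iff] at h₁ h₂ ⊢
    have := bidual_add _ _ h₁ h₂
    have e1 : -(z₁ + z₂) = -z₁ + -z₂ := by ext η; simp; ring
    rw [e1]; exact this
  have hnegsmul : ∀ (t : ℝ), 0 ≤ t → ∀ z ∈ negSet, t • z ∈ negSet := by
    intro t ht z hz
    rw [hneg_iff] at hz ⊢
    have := bidual_smul t _ ht hz
    have e1 : -(t • z) = t • -z := by ext η; simp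
    rw [e1]; exact this
  have hsmul_e_neg : ∀ c : ℝ, c ≤ 0 → c • e'' ∈ negSet := by
    intro c hc
    rw [hneg_iff]
    have := bidual_smul (-c) _ (by linarith) hepos
    have e1 : -(c • e'') = -c • e'' := by ext η; simp
    rw [e1]; exact this
  have hnegconv : Convex ℝ negSet := by
    intro x hx y hy s t hs ht hst
    exact hnegadd _ (hnegsmul s hs x hx) _ (hnegsmul t ht y hy)
  have hη₀e : η₀ e = 1 := (hQmem η₀ hη₀).2.2
  have hη₀pos : dualNonneg X η₀ := (hQmem η₀ hη₀).2.1
  -- the order-unit norm is attained in X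
  have hXnorm : ∀ f : X, -(‖f‖ • e) ≤ f ∧ f ≤ ‖f‖ • e := by
    intro f
    set S : Set ℝ := {c : ℝ | -(c • e) ≤ f ∧ f ≤ c • e} with hS
    have hScl : IsClosed S := by
      have hc1 : Continuous fun c : ℝ => c • e := continuous_id.smul continuous_const
      apply IsClosed.inter
      · exact isClosed_le hc1.neg continuous_const
      · exact isClosed_le continuous_const hc1
    have hSne : S.Nonempty := by
      by_contra hemp
      rw [Set.not_nonempty_iff_eq_empty] at hemp
      have hnf : ‖f‖ = 0 := by rw [hnorm f, ← hS, hemp, Real.sInf_empty]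
      have hf0 : f = 0 := norm_eq_zero.mp hnf
      have h0 : (0 : ℝ) ∈ S := by rw [hS]; constructor <;> simp [hf0]
      rw [hemp] at h0
      exact h0
    have hSbd : BddBelow S := by
      refine ⟨-|η₀ f|, fun c hc => ?_⟩
      have h1 : η₀ (-(c • e)) ≤ η₀ f := by
        have := hc.1
        have h2 : (0:ℝ) ≤ η₀ (f - -(c • e)) := hη₀pos _ (by simpa using sub_nonneg.mpr this)
        simp only [map_sub] at h2; linarith
      have h1' : η₀ (-(c • e)) = -c := by simp [hη₀e]
      have : -c ≤ η₀ f := h1' ▸ h1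
      have habs : -|η₀ f| ≤ η₀ f := neg_abs_le _
      nlinarith [abs_nonneg (η₀ f), le_abs_self (η₀ f), neg_abs_le (η₀ f)]
    have hmem : sInf S ∈ S := hScl.csInf_mem hSne hSbd
    have hfS : ‖f‖ = sInf S := by rw [hnorm f, ← hS]
    rw [hfS]
    exact hmem
  -- elements of Q have norm at most one
  have hQbound : ∀ η ∈ Q, ∀ a : StrongDual ℝ (StrongDual ℝ X), a η ≤ ‖a‖ := by
    intro η hη a
    have hηn : ‖η‖ ≤ 1 := by
      apply ContinuousLinearMap.opNorm_le_bound _ zero_le_one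
      intro f
      obtain ⟨h1, h2⟩ := hXnorm f
      have hp := (hQmem η hη).2.1
      have hub : η f ≤ ‖f‖ := by
        have := hp _ (sub_nonneg.mpr h2)
        simp only [map_sub] at this
        have he1 : η (‖f‖ • e) = ‖f‖ := by simp [(hQmem η hη).2.2]
        linarith [he1 ▸ this]
      have hlb : -‖f‖ ≤ η f := by
        have := hp _ (sub_nonneg.mpr h1)
        simp only [map_sub, map_neg] at this
        have he1 : η (‖f‖ • e) = ‖f‖ := by simp [(hQmem η hη).2.2]
        rw [he1] at this; linarith
      rw [one_mul, Real.norm_eq_abs]; exact abs_le.mpr ⟨hlb, hub⟩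
    calc a η ≤ |a η| := le_abs_self _
      _ = ‖a η‖ := (Real.norm_eq_abs _).symm
      _ ≤ ‖a‖ * ‖η‖ := a.le_opNorm η
      _ ≤ ‖a‖ * 1 := mul_le_mul_of_nonneg_left hηn (norm_nonneg a)
      _ = ‖a‖ := mul_one _
  -- the bidual norm is attained
  have hbid : ∀ a : StrongDual ℝ (StrongDual ℝ X),
      bidualNonneg X (a + ‖a‖ • e'') ∧ bidualNonneg X (‖a‖ • e'' - a) := by
    intro a
    set S : Set ℝ := {c : ℝ | bidualNonneg X (a + c • e'') ∧ bidualNonneg X (c • e'' - a)} with hS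
    have hScl : IsClosed S := by
      have h1 : ∀ η : StrongDual ℝ X, IsClosed {c : ℝ | 0 ≤ a η + c * η e} := fun η =>
        isClosed_le continuous_const (by fun_prop)
      have h2 : ∀ η : StrongDual ℝ X, IsClosed {c : ℝ | 0 ≤ c * η e - a η} := fun η =>
        isClosed_le continuous_const (by fun_prop)
      have : S = (⋂ η : {η : StrongDual ℝ X // dualNonneg X η}, {c : ℝ | 0 ≤ a η.1 + c * η.1 e}) ∩
          (⋂ η : {η : StrongDual ℝ X // dualNonneg X η}, {c : ℝ | 0 ≤ c * η.1 e - a η.1}) := by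
        ext c
        simp only [hS, Set.mem_setOf_eq, Set.mem_inter_iff, Set.mem_iInter, bidualNonneg]
        constructor
        · rintro ⟨hc1, hc2⟩
          refine ⟨fun η => ?_, fun η => ?_⟩
          · simpa [he'', NormedSpace.dual_def] using hc1 η.1 η.2
          · simpa [he'', NormedSpace.dual_def] using hc2 η.1 η.2
        · rintro ⟨hc1, hc2⟩
          refine ⟨fun η hη => ?_, fun η hη => ?_⟩
          · simpa [he'', NormedSpace.dual_def] using hc1 ⟨η, hη⟩
          · simpa [he'', NormedSpace.dual_def] using hc2 ⟨η, hη⟩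
      rw [this]
      exact (isClosed_iInter (fun (η : {η : StrongDual ℝ X // dualNonneg X η}) => h1 η.1)).inter (isClosed_iInter (fun (η : {η : StrongDual ℝ X // dualNonneg X η}) => h2 η.1))
    have hSne : S.Nonempty := by
      by_contra hemp
      rw [Set.not_nonempty_iff_eq_empty] at hemp
      have hnf : ‖a‖ = 0 := by rw [hbnorm a, ← hS, hemp, Real.sInf_empty]
      have ha0 : a = 0 := (norm_eq_zero (E := StrongDual ℝ (StrongDual ℝ X))).mp hnf
      have h0 : (0 : ℝ) ∈ S := by
        rw [hS]
        constructor <;> · intro η hη; simp [ha0]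
      rw [hemp] at h0
      exact h0
    have hSbd : BddBelow S := by
      refine ⟨-|a η₀|, fun c hc => ?_⟩
      have h1 := hc.1 η₀ hη₀pos
      have h2 : a η₀ + c * η₀ e = a η₀ + c := by rw [hη₀e, mul_one]
      have h1' : (0:ℝ) ≤ a η₀ + c := by
        simpa [he'', NormedSpace.dual_def, hη₀e] using h1
      nlinarith [le_abs_self (a η₀), neg_abs_le (a η₀)]
    have hmem : sInf S ∈ S := hScl.csInf_mem hSne hSbd
    have hfS : ‖a‖ = sInf S := by rw [hbnorm a, ← hS]
    rw [hfS]
    exact hmem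
  -- the primal value as a real number
  set pa : StrongDual ℝ (StrongDual ℝ X) → ℝ := fun a => sSup {r : ℝ | ∃ η ∈ Q, r = a η} with hpa
  have hpane : ∀ a : StrongDual ℝ (StrongDual ℝ X), {r : ℝ | ∃ η ∈ Q, r = a η}.Nonempty :=
    fun a => ⟨a η₀, η₀, hη₀, rfl⟩
  have hpabdd : ∀ a : StrongDual ℝ (StrongDual ℝ X), BddAbove {r : ℝ | ∃ η ∈ Q, r = a η} := by
    intro a
    refine ⟨‖a‖, ?_⟩
    rintro r ⟨η, hη, rfl⟩
    exact hQbound η hη a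
  have pa_ub : ∀ (a : StrongDual ℝ (StrongDual ℝ X)) (η), η ∈ Q → a η ≤ pa a := by
    intro a η hη
    exact le_csSup (hpabdd a) ⟨η, hη, rfl⟩
  have pa_le : ∀ (a : StrongDual ℝ (StrongDual ℝ X)) (c : ℝ), (∀ η ∈ Q, a η ≤ c) → pa a ≤ c := by
    intro a c hc
    apply csSup_le (hpane a)
    rintro r ⟨η, hη, rfl⟩
    exact hc η hη
  have hPval : ∀ a : StrongDual ℝ (StrongDual ℝ X), Pval X Q a = ((pa a : ℝ) : EReal) := by
    intro a
    apply le_antisymm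
    · apply sSup_le
      rintro x ⟨η, hη, rfl⟩
      exact_mod_cast EReal.coe_le_coe_iff.mpr (pa_ub a η hη)
    · by_contra hcon
      push_neg at hcon
      obtain ⟨r, hr1, hr2⟩ := EReal.lt_iff_exists_real_btwn.mp hcon
      have : r < pa a := by exact_mod_cast hr2
      obtain ⟨s, ⟨η, hη, rfl⟩, hrs⟩ := exists_lt_of_lt_csSup (hpane a) this
      have hle : ((a η : ℝ) : EReal) ≤ Pval X Q a := le_sSup ⟨η, hη, rfl⟩
      have : (r : EReal) < Pval X Q a := lt_of_lt_of_le (by exact_mod_cast hrs) hle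
      exact absurd hr1 (not_lt.mpr this.le)
  -- Dval machinery
  have hDle : ∀ (K : Set (StrongDual ℝ (StrongDual ℝ X))) (a : StrongDual ℝ (StrongDual ℝ X)) (c : ℝ),
      a - c • e'' ∈ K → Dval X e K a ≤ (c : EReal) := by
    intro K a c hc
    apply sInf_le
    exact ⟨c, rfl, a - c • e'', hc, by abel⟩
  have hDge : ∀ (K : Set (StrongDual ℝ (StrongDual ℝ X))) (a : StrongDual ℝ (StrongDual ℝ X)) (r : ℝ),
      (∀ c : ℝ, a - c • e'' ∈ K → r ≤ c) → (r : EReal) ≤ Dval X e K a := by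
    intro K a r h
    apply le_sInf
    rintro x ⟨c, rfl, z, hz, hzc⟩
    have hzz : z = a - c • e'' := by rw [← hzc]; abel
    rw [hzz] at hz
    exact_mod_cast h c hz
  have hKup : ∀ (K : Set (StrongDual ℝ (StrongDual ℝ X))), K + negSet ⊆ K →
      ∀ w ∈ K, ∀ t : ℝ, t ≤ 0 → w + t • e'' ∈ K := fun K hK w hw t ht =>
    hK (Set.add_mem_add hw (hsmul_e_neg t ht))
  have hDup : ∀ (K : Set (StrongDual ℝ (StrongDual ℝ X))),
      (∀ w ∈ K, ∀ t : ℝ, t ≤ 0 → w + t • e'' ∈ K) →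
      ∀ (a : StrongDual ℝ (StrongDual ℝ X)) (c : ℝ), Dval X e K a < (c : EReal) → a - c • e'' ∈ K := by
    intro K hK a c h
    rw [Dval, sInf_lt_iff] at h
    obtain ⟨x, ⟨c₀, rfl, z, hz, hzc⟩, hlt⟩ := h
    have hc₀ : c₀ < c := by exact_mod_cast hlt
    have hzz : z = a - c₀ • e'' := by rw [← hzc]; abel
    rw [hzz] at hz
    have hmem := hK _ hz (c₀ - c) (by linarith)
    have heq : a - c • e'' = a - c₀ • e'' + (c₀ - c) • e'' := by module
    rwa [heq]
  have hDmono : ∀ (K K' : Set (StrongDual ℝ (StrongDual ℝ X))), K ⊆ K' →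
      ∀ a, Dval X e K' a ≤ Dval X e K a := by
    intro K K' h a
    apply sInf_le_sInf
    rintro x ⟨c, rfl, z, hz, hzc⟩
    exact ⟨c, rfl, z, h hz, hzc⟩
  -- KQ facts
  have hKQmem : ∀ z : StrongDual ℝ (StrongDual ℝ X), z ∈ KQ ↔ ∀ η ∈ Q, z η ≤ 0 := by
    intro z; rw [hKQ]; rfl
  have happly : ∀ (a : StrongDual ℝ (StrongDual ℝ X)) (c : ℝ) (η), η ∈ Q →
      (a - c • e'') η = a η - c := by
    intro a c η hη
    simp [he'', NormedSpace.dual_def, (hQmem η hη).2.2]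
  have hDKQ : ∀ a : StrongDual ℝ (StrongDual ℝ X), Dval X e KQ a = ((pa a : ℝ) : EReal) := by
    intro a
    apply le_antisymm
    · apply hDle
      rw [hKQmem]
      intro η hη
      rw [happly a (pa a) η hη]
      linarith [pa_ub a η hη]
    · apply hDge
      intro c hc
      rw [hKQmem] at hc
      apply pa_le
      intro η hη
      have := hc η hη
      rw [happly a c η hη] at this
      linarith
  have hKQclosed : IsClosed KQ := by
    rw [hKQ]
    have hset : {z : StrongDual ℝ (StrongDual ℝ X) | ∀ η ∈ Q, z η ≤ 0} =
        ⋂ η : Q, {z : StrongDual ℝ (StrongDual ℝ X) | z η.1 ≤ 0} := by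
      ext z; simp
    rw [hset]
    refine isClosed_iInter fun η => isClosed_le ?_ continuous_const
    exact (ContinuousLinearMap.apply ℝ ℝ η.1).continuous
  -- upward-closedness of the various sets
  have hSnn : ∀ S : Set (StrongDual ℝ (StrongDual ℝ X)), (S + negSet) + negSet ⊆ S + negSet := by
    rintro S x ⟨y, hy, z, hz, rfl⟩
    obtain ⟨w, hw, v, hv, rfl⟩ := hy
    have := Set.add_mem_add hw (hnegadd _ hv _ hz)
    simpa [add_assoc] using this
  have hclup : ∀ S : Set (StrongDual ℝ (StrongDual ℝ X)), (S + negSet ⊆ S) →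
      closure S + negSet ⊆ closure S := by
    rintro S hS x ⟨y, hy, z, hz, rfl⟩
    have hmap : Continuous fun w : StrongDual ℝ (StrongDual ℝ X) => w + z :=
      continuous_id.add continuous_const
    have h1 : y + z ∈ closure ((fun w => w + z) '' S) :=
      (image_closure_subset_closure_image hmap) (Set.mem_image_of_mem _ hy)
    apply closure_mono _ h1
    rintro - ⟨w, hw, rfl⟩
    exact hS (Set.add_mem_add hw hz)
  have hHhatmem : ∀ a : StrongDual ℝ (StrongDual ℝ X), a ∈ HhatQ ↔ ∀ η ∈ AhatQ, a η = 0 := by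
    intro a; rw [hHhatQ]; rfl
  have hQsubC : Q ⊆ CQ := by
    intro η hη; rw [hCQ]; exact ⟨η, hη, 1, zero_le_one, (one_smul ℝ η).symm⟩
  have hC0 : (0 : StrongDual ℝ X) ∈ CQ := by
    rw [hCQ]; exact ⟨η₀, hη₀, 0, le_rfl, (zero_smul ℝ η₀).symm⟩
  have hCsubA : CQ ⊆ AhatQ := by
    intro ξ hξ; rw [hAhatQ]
    exact ⟨ξ, hξ, 0, hC0, by simp⟩
  have hHNsubKQ : HhatQ + negSet ⊆ KQ := by
    rintro x ⟨h, hh, z, hz, rfl⟩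
    rw [hKQmem]
    intro η hη
    have h1 : h η = 0 := (hHhatmem h).mp hh η (hCsubA (hQsubC hη))
    have h2 : z η ≤ 0 := by
      have := (hneg_iff z).mp hz η (hQmem η hη).2.1
      simp only [ContinuousLinearMap.neg_apply] at this
      linarith
    have : (h + z) η = h η + z η := rfl
    rw [this, h1]; linarith
  have hAQsubKQ : AQ ⊆ KQ := by rw [hAQ]; exact closure_minimal hHNsubKQ hKQclosed
  have hAQclosed : IsClosed AQ := by rw [hAQ]; exact isClosed_closure
  have hAQup : AQ + negSet ⊆ AQ := by
    rw [hAQ]; exact hclup _ (hSnn HhatQ)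
  -- strong duality for a set versus its closure
  have hDclos : ∀ S : Set (StrongDual ℝ (StrongDual ℝ X)), (S + negSet) ⊆ S →
      ∀ (a : StrongDual ℝ (StrongDual ℝ X)) (c : ℝ), a - c • e'' ∈ closure S →
      ∀ c' : ℝ, c < c' → a - c' • e'' ∈ S := by
    intro S hS a c hc c' hc'
    obtain ⟨w, hw, hdist⟩ := (Metric.mem_closure_iff (α := StrongDual ℝ (StrongDual ℝ X))).mp hc (c' - c) (by linarith)
    set u := a - c • e'' - w with hu'
    have hu : ‖u‖ ≤ c' - c := by
      rw [show dist (a - c • e'') w = ‖u‖ from dist_eq_norm (E := StrongDual ℝ (StrongDual ℝ X)) _ _] at hdist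
      exact le_of_lt hdist
    have h1 : bidualNonneg X (‖u‖ • e'' - u) := (hbid u).2
    have h2 : bidualNonneg X (((c' - c) - ‖u‖) • e'') := bidual_smul _ _ (by linarith) hepos
    have h3 : bidualNonneg X ((c' - c) • e'' - u) := by
      have hsum := bidual_add _ _ h2 h1
      have heq : ((c' - c) - ‖u‖) • e'' + (‖u‖ • e'' - u) = (c' - c) • e'' - u := by module
      rwa [heq] at hsum
    have hv : u - (c' - c) • e'' ∈ negSet := by
      rw [hneg_iff]
      have : -(u - (c' - c) • e'') = (c' - c) • e'' - u := by abel
      rw [this]; exact h3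
    have heq2 : a - c' • e'' = w + (u - (c' - c) • e'') := by rw [hu']; module
    rw [heq2]
    exact hS (Set.add_mem_add hw hv)
  have hDclosEq : ∀ S : Set (StrongDual ℝ (StrongDual ℝ X)), (S + negSet ⊆ S) →
      ∀ a, Dval X e S a = Dval X e (closure S) a := by
    intro S hS a
    apply le_antisymm _ (hDmono _ _ subset_closure a)
    by_contra hcon
    push_neg at hcon
    obtain ⟨r, hr1, hr2⟩ := EReal.lt_iff_exists_real_btwn.mp hcon
    have hfe : a - r • e'' ∈ closure S := hDup _ (hKup _ (hclup S hS)) a r hr1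
    obtain ⟨r', hr1', hr2'⟩ := EReal.lt_iff_exists_real_btwn.mp hr2
    have hr'' : r < r' := by exact_mod_cast hr1'
    have : a - r' • e'' ∈ S := hDclos S hS a r hfe r' hr''
    exact absurd hr2' (not_lt.mpr (hDle S a r' this))
  -- algebra of CQ and AhatQ
  have hCsmul : ∀ t : ℝ, 0 ≤ t → ∀ ξ ∈ CQ, t • ξ ∈ CQ := by
    intro t ht ξ hξ
    rw [hCQ] at hξ ⊢
    obtain ⟨η, hη, s', hs', rfl⟩ := hξ
    exact ⟨η, hη, t * s', mul_nonneg ht hs', (smul_smul t s' η)⟩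
  have hCadd : ∀ ξ₁ ∈ CQ, ∀ ξ₂ ∈ CQ, ξ₁ + ξ₂ ∈ CQ := by
    intro ξ₁ h₁ ξ₂ h₂
    rw [hCQ] at h₁ h₂ ⊢
    obtain ⟨η₁, hη₁, t₁, ht₁, rfl⟩ := h₁
    obtain ⟨η₂, hη₂, t₂, ht₂, rfl⟩ := h₂
    by_cases hts : t₁ + t₂ = 0
    · have ht10 : t₁ = 0 := by linarith
      have ht20 : t₂ = 0 := by linarith
      exact ⟨η₀, hη₀, 0, le_rfl, by simp [ht10, ht20]⟩
    · have hpos : 0 < t₁ + t₂ := lt_of_le_of_ne (by linarith) (Ne.symm hts)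
      refine ⟨(t₁ / (t₁ + t₂)) • η₁ + (t₂ / (t₁ + t₂)) • η₂, ?_, t₁ + t₂, by linarith, ?_⟩
      · exact hQconv hη₁ hη₂ (by positivity) (by positivity) (by field_simp)
      · rw [smul_add, smul_smul, smul_smul]
        field_simp
  have hCconv : Convex ℝ CQ := fun ξ₁ h₁ ξ₂ h₂ s' t hs' ht _ =>
    hCadd _ (hCsmul s' hs' _ h₁) _ (hCsmul t ht _ h₂)
  have hAsmul : ∀ (t : ℝ), ∀ ξ ∈ AhatQ, t • ξ ∈ AhatQ := by
    intro t ξ hξ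
    rw [hAhatQ] at hξ ⊢
    obtain ⟨ξ₁, h₁, ξ₂, h₂, rfl⟩ := hξ
    rcases le_or_gt 0 t with ht | ht
    · exact ⟨t • ξ₁, hCsmul t ht _ h₁, t • ξ₂, hCsmul t ht _ h₂, (smul_sub t ξ₁ ξ₂).symm⟩
    · refine ⟨(-t) • ξ₂, hCsmul _ (by linarith) _ h₂, (-t) • ξ₁, hCsmul _ (by linarith) _ h₁, ?_⟩
      module
  have hAconv : Convex ℝ AhatQ := by
    rw [hAhatQ]; exact hCconv.sub hCconv
  have h0Hhat : (0 : StrongDual ℝ (StrongDual ℝ X)) ∈ HhatQ := by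
    rw [hHhatmem]; intro η hη; rfl
  have hHsmul : ∀ (t : ℝ), ∀ hh ∈ HhatQ, t • hh ∈ HhatQ := by
    intro t hh h
    rw [hHhatmem] at h ⊢
    intro η hη
    have : (t • hh) η = t * hh η := rfl
    rw [this, h η hη, mul_zero]
  have hHadd : ∀ a ∈ HhatQ, ∀ b ∈ HhatQ, a + b ∈ HhatQ := by
    intro a ha b hb
    rw [hHhatmem] at ha hb ⊢
    intro η hη
    have : (a + b) η = a η + b η := rfl
    rw [this, ha η hη, hb η hη, add_zero]
  have hHconv : Convex ℝ HhatQ := fun x hx y hy s' t hs' ht _ =>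
    hHadd _ (hHsmul s' x hx) _ (hHsmul t y hy)
  have h0AQ : (0 : StrongDual ℝ (StrongDual ℝ X)) ∈ AQ := by
    rw [hAQ]
    apply subset_closure
    simpa using Set.add_mem_add h0Hhat hneg0
  -- limit lemma
  have hlim : ∀ z : StrongDual ℝ (StrongDual ℝ X),
      Filter.Tendsto (fun n : ℕ => z - (1 / (n + 1) : ℝ) • e'') Filter.atTop (nhds z) := by
    intro z
    have h1 : Filter.Tendsto (fun n : ℕ => (1 / (n + 1) : ℝ)) Filter.atTop (nhds 0) :=
      tendsto_one_div_add_atTop_nhds_zero_nat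
    have h2 := (h1.smul_const e'')
    have h3 := Filter.Tendsto.sub (tendsto_const_nhds (x := z)) h2
    rwa [show z - (0:ℝ) • e'' = z by ext η; simp] at h3
  -- (2) → (3)
  have h23 : AQ = KQ → ∀ a, Pval X Q a = Dval X e AQ a := by
    intro h2 a
    rw [hPval a, h2, hDKQ a]
  -- (3) → (2)
  have h32 : (∀ a, Pval X Q a = Dval X e AQ a) → AQ = KQ := by
    intro h3
    apply Set.Subset.antisymm hAQsubKQ
    intro z hz
    have hpz : pa z ≤ 0 := pa_le z 0 fun η hη => (hKQmem z).mp hz η hη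
    have hseq : ∀ n : ℕ, z - (1 / (n + 1) : ℝ) • e'' ∈ AQ := by
      intro n
      apply hDup AQ (hKup AQ hAQup) z
      rw [← h3 z, hPval z]
      have : (0:ℝ) < 1 / (n + 1) := by positivity
      exact_mod_cast lt_of_le_of_lt hpz this
    exact hAQclosed.mem_of_tendsto (hlim z) (Filter.Eventually.of_forall hseq)
  -- core of the `moreover` part
  have hmain1 : ∀ S : Set (StrongDual ℝ (StrongDual ℝ X)), (S + negSet ⊆ S) →
      (∀ a, Pval X Q a = Dval X e S a) → (S ⊆ KQ ∧ closure S = KQ) := by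
    intro S hS hdual
    have hSsubKQ : S ⊆ KQ := by
      intro z hz
      rw [hKQmem]
      intro η hη
      have hd : Dval X e S z ≤ ((0:ℝ) : EReal) := hDle S z 0 (by convert hz using 1; ext η; simp)
      rw [← hdual z, hPval z] at hd
      have hpz : pa z ≤ 0 := by exact_mod_cast hd
      linarith [pa_ub z η hη]
    refine ⟨hSsubKQ, Set.Subset.antisymm (closure_minimal hSsubKQ hKQclosed) ?_⟩
    intro z hz
    have hpz : pa z ≤ 0 := pa_le z 0 fun η hη => (hKQmem z).mp hz η hη
    have hseq : ∀ n : ℕ, z - (1 / (n + 1) : ℝ) • e'' ∈ S := by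
      intro n
      apply hDup S (hKup S hS) z
      rw [← hdual z, hPval z]
      have : (0:ℝ) < 1 / (n + 1) := by positivity
      exact_mod_cast lt_of_le_of_lt hpz this
    exact mem_closure_of_tendsto (hlim z) (Filter.Eventually.of_forall hseq)
  have hmoreover : ∀ 𝔥 : Submodule ℝ (StrongDual ℝ (StrongDual ℝ X)),
      (∀ a : StrongDual ℝ (StrongDual ℝ X),
          Pval X Q a = Dval X e ((𝔥 : Set (StrongDual ℝ (StrongDual ℝ X))) + negSet) a) →
        (𝔥 : Set (StrongDual ℝ (StrongDual ℝ X))) ⊆ HhatQ ∧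
        closure ((𝔥 : Set (StrongDual ℝ (StrongDual ℝ X))) + negSet) = KQ := by
    intro 𝔥 hdual
    obtain ⟨hsub, hclos⟩ := hmain1 _ (hSnn (𝔥 : Set (StrongDual ℝ (StrongDual ℝ X)))) hdual
    refine ⟨?_, hclos⟩
    intro h hh
    have hmem : ∀ g : StrongDual ℝ (StrongDual ℝ X), g ∈ (𝔥 : Set (StrongDual ℝ (StrongDual ℝ X))) →
        ∀ η ∈ Q, g η ≤ 0 := by
      intro g hg η hη
      have hgm : g ∈ (𝔥 : Set (StrongDual ℝ (StrongDual ℝ X))) + negSet := by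
        simpa using Set.add_mem_add hg hneg0
      exact (hKQmem g).mp (hsub hgm) η hη
    have hq0 : ∀ η ∈ Q, h η = 0 := by
      intro η hη
      refine le_antisymm (hmem h hh η hη) ?_
      have := hmem (-h) (by
        have h1 := 𝔥.smul_mem (-1 : ℝ) hh
        have e1 : (-1 : ℝ) • h = -h := by ext η; simp
        rw [e1] at h1; exact h1) η hη
      simp only [ContinuousLinearMap.neg_apply] at this
      linarith
    rw [hHhatmem]
    intro ξ hξ
    rw [hAhatQ] at hξ
    obtain ⟨ξ₁, hξ₁, ξ₂, hξ₂, rfl⟩ := hξ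
    rw [hCQ] at hξ₁ hξ₂
    obtain ⟨η₁, hη₁, t₁, ht₁, rfl⟩ := hξ₁
    obtain ⟨η₂, hη₂, t₂, ht₂, rfl⟩ := hξ₂
    have e1 : h (t₁ • η₁ - t₂ • η₂) = t₁ * h η₁ - t₂ * h η₂ := by
      rw [map_sub, map_smul, map_smul]; rfl
    rw [e1, hq0 η₁ hη₁, hq0 η₂ hη₂]
    ring
  -- (1) → (2)
  have h12 : (∃ 𝔥 : Submodule ℝ (StrongDual ℝ (StrongDual ℝ X)),
      ∀ a : StrongDual ℝ (StrongDual ℝ X),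
        Pval X Q a = Dval X e ((𝔥 : Set (StrongDual ℝ (StrongDual ℝ X))) + negSet) a) → AQ = KQ := by
    rintro ⟨𝔥, hdual⟩
    obtain ⟨hsub, hclos⟩ := hmoreover 𝔥 hdual
    apply Set.Subset.antisymm hAQsubKQ
    rw [← hclos, hAQ]
    apply closure_mono
    exact Set.add_subset_add hsub (subset_refl _)
  -- (2) → (1)
  have h21 : AQ = KQ → (∃ 𝔥 : Submodule ℝ (StrongDual ℝ (StrongDual ℝ X)),
      ∀ a : StrongDual ℝ (StrongDual ℝ X),
        Pval X Q a = Dval X e ((𝔥 : Set (StrongDual ℝ (StrongDual ℝ X))) + negSet) a) := by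
    intro h2
    let 𝔥₀ : Submodule ℝ (StrongDual ℝ (StrongDual ℝ X)) :=
      { carrier := HhatQ
        add_mem' := by intro a b ha hb; exact hHadd a ha b hb
        zero_mem' := h0Hhat
        smul_mem' := by intro c x hx; exact hHsmul c x hx }
    refine ⟨𝔥₀, fun a => ?_⟩
    have hcoe : (𝔥₀ : Set (StrongDual ℝ (StrongDual ℝ X))) = HhatQ := rfl
    rw [hPval a, hcoe, hDclosEq _ (hSnn HhatQ) a, ← hAQ, h2, hDKQ a]
  -- convexity of the images under the canonical embedding J
  have hconvJA : Convex ℝ (inclusionInDoubleDual ℝ (StrongDual ℝ X) '' AhatQ) :=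
    by exact hAconv.linear_image (inclusionInDoubleDual ℝ (StrongDual ℝ X)).toLinearMap
  have hconvJC : Convex ℝ (inclusionInDoubleDual ℝ (StrongDual ℝ X) '' CQ) :=
    by exact hCconv.linear_image (inclusionInDoubleDual ℝ (StrongDual ℝ X)).toLinearMap
  -- Claim A : the weak* closure of J(Â_Q) intersected with the positive cone is the polar of A_Q
  have claimA : wstarClosure (StrongDual ℝ (StrongDual ℝ X))
      (inclusionInDoubleDual ℝ (StrongDual ℝ X) '' AhatQ) ∩
      {ℵ : StrongDual ℝ (StrongDual ℝ (StrongDual ℝ X)) | tridualNonneg X ℵ} =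
      {ℵ : StrongDual ℝ (StrongDual ℝ (StrongDual ℝ X)) | ∀ z ∈ AQ, ℵ z ≤ 0} := by
    ext ℵ
    simp only [Set.mem_inter_iff, Set.mem_setOf_eq]
    constructor
    · rintro ⟨hw, hpos⟩ z hz
      have hH0 : ∀ hh ∈ HhatQ, ℵ hh = 0 := by
        intro hh hhh
        refine aux_wstarClosure_subset _ _ (fun x => x hh = 0) ?_ ?_ ℵ hw
        · exact isClosed_eq (WeakDual.eval_continuous hh) continuous_const
        · rintro - ⟨ξ, hξ, rfl⟩
          rw [NormedSpace.dual_def]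
          exact (hHhatmem hh).mp hhh ξ hξ
      have hle : ∀ w ∈ HhatQ + negSet, ℵ w ≤ 0 := by
        rintro w ⟨hh, hhh, v, hv, rfl⟩
        have h2 : 0 ≤ ℵ (-v) := hpos (-v) ((hneg_iff v).mp hv)
        rw [show ℵ (-v) = -ℵ v by exact map_neg ℵ v] at h2
        have h3 : ℵ (hh + v) = ℵ hh + ℵ v := map_add ℵ hh v
        rw [h3, hH0 hh hhh]
        linarith
      have hcl2 : IsClosed {w : StrongDual ℝ (StrongDual ℝ X) | ℵ w ≤ 0} :=
        isClosed_le ℵ.continuous continuous_const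
      rw [hAQ] at hz
      exact closure_minimal hle hcl2 hz
    · intro hpol
      constructor
      · by_contra hns
        obtain ⟨z, u, hzu, huz⟩ := aux_wstar_separate _ _ hconvJA ℵ hns
        have h0A : (0 : StrongDual ℝ X) ∈ AhatQ := hCsubA hC0
        have hu0 : (0:ℝ) < u := by
          have := hzu _ (Set.mem_image_of_mem _ h0A)
          simpa using this
        have hzH : z ∈ HhatQ := by
          rw [hHhatmem]
          intro ξ hξ
          by_contra hne
          have hbig := hzu _ (Set.mem_image_of_mem _ (hAsmul ((u + 1) / (z ξ)) ξ hξ))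
          rw [NormedSpace.dual_def] at hbig
          have hz2 : z (((u + 1) / (z ξ)) • ξ) = (u + 1) / (z ξ) * z ξ := by
            rw [map_smul]; rfl
          rw [hz2, div_mul_cancel₀ _ hne] at hbig
          linarith
        have hzAQ : z ∈ AQ := by
          rw [hAQ]; apply subset_closure
          simpa using Set.add_mem_add hzH hneg0
        linarith [hpol z hzAQ]
      · intro a ha
        have hv : -a ∈ negSet := by rw [hneg_iff, show - -a = a by ext η; simp]; exact ha
        have hm : -a ∈ AQ := by
          rw [hAQ]; apply subset_closure
          simpa using Set.add_mem_add h0Hhat hv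
        have := hpol (-a) hm
        rw [show ℵ (-a) = -ℵ a by exact map_neg ℵ a] at this
        linarith
  -- Claim B : the weak* closure of J(C_Q) is the polar of K_Q
  have claimB : wstarClosure (StrongDual ℝ (StrongDual ℝ X))
      (inclusionInDoubleDual ℝ (StrongDual ℝ X) '' CQ) =
      {ℵ : StrongDual ℝ (StrongDual ℝ (StrongDual ℝ X)) | ∀ z ∈ KQ, ℵ z ≤ 0} := by
    ext ℵ
    simp only [Set.mem_setOf_eq]
    constructor
    · intro hw z hz
      refine aux_wstarClosure_subset _ _ (fun x => x z ≤ 0) ?_ ?_ ℵ hw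
      · exact isClosed_le (WeakDual.eval_continuous z) continuous_const
      · rintro - ⟨ξ, hξ, rfl⟩
        rw [NormedSpace.dual_def]
        rw [hCQ] at hξ
        obtain ⟨η, hη, t, ht, rfl⟩ := hξ
        have hz2 : z (t • η) = t * z η := by rw [map_smul]; rfl
        rw [hz2]
        have := (hKQmem z).mp hz η hη
        nlinarith
    · intro hpol
      by_contra hns
      obtain ⟨z, u, hzu, huz⟩ := aux_wstar_separate _ _ hconvJC ℵ hns
      have hu0 : (0:ℝ) < u := by
        have := hzu _ (Set.mem_image_of_mem _ hC0)
        simpa using this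
      have hzK : z ∈ KQ := by
        rw [hKQmem]
        intro η hη
        by_contra hne
        push_neg at hne
        have hbig := hzu _ (Set.mem_image_of_mem _
          (hCsmul ((u + 1) / (z η)) (by positivity) η (hQsubC hη)))
        rw [NormedSpace.dual_def] at hbig
        have hz2 : z (((u + 1) / (z η)) • η) = (u + 1) / (z η) * z η := by
          rw [map_smul]; rfl
        rw [hz2, div_mul_cancel₀ _ (ne_of_gt hne)] at hbig
        linarith
      linarith [hpol z hzK]
  -- AQ is a cone
  have hAQsmul : ∀ t : ℝ, 0 ≤ t → ∀ w ∈ AQ, t • w ∈ AQ := by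
    intro t ht w hw
    rw [hAQ] at hw ⊢
    have hmap : Continuous fun v : StrongDual ℝ (StrongDual ℝ X) => t • v :=
      by exact continuous_const_smul t
    have h1 : t • w ∈ closure ((fun v => t • v) '' (HhatQ + negSet)) :=
      (image_closure_subset_closure_image hmap) (Set.mem_image_of_mem _ hw)
    apply closure_mono _ h1
    rintro - ⟨v, hv, rfl⟩
    obtain ⟨hh, hhh, nv, hnv, rfl⟩ := hv
    show t • (hh + nv) ∈ HhatQ + negSet
    rw [smul_add]
    exact Set.add_mem_add (hHsmul t hh hhh) (hnegsmul t ht nv hnv)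
  -- (2) → (4)
  have h24 : AQ = KQ →
      (wstarClosure (StrongDual ℝ (StrongDual ℝ X)) (inclusionInDoubleDual ℝ (StrongDual ℝ X) '' AhatQ) ∩
        {ℵ : StrongDual ℝ (StrongDual ℝ (StrongDual ℝ X)) | tridualNonneg X ℵ} =
      wstarClosure (StrongDual ℝ (StrongDual ℝ X)) (inclusionInDoubleDual ℝ (StrongDual ℝ X) '' CQ)) := by
    intro h2
    rw [claimA, claimB, h2]
  -- (4) → (2)
  have h42 :
      (wstarClosure (StrongDual ℝ (StrongDual ℝ X)) (inclusionInDoubleDual ℝ (StrongDual ℝ X) '' AhatQ) ∩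
        {ℵ : StrongDual ℝ (StrongDual ℝ (StrongDual ℝ X)) | tridualNonneg X ℵ} =
      wstarClosure (StrongDual ℝ (StrongDual ℝ X)) (inclusionInDoubleDual ℝ (StrongDual ℝ X) '' CQ)) →
      AQ = KQ := by
    intro h4
    apply Set.Subset.antisymm hAQsubKQ
    intro z hz
    by_contra hzAQ
    have hconvAQ : Convex ℝ AQ := by
      rw [hAQ]; have hc := hHconv.add hnegconv
      exact Convex.closure (E := StrongDual ℝ (StrongDual ℝ X)) (by exact hc)
    obtain ⟨ℵ, u, hAu, huz⟩ := geometric_hahn_banach_closed_point hconvAQ hAQclosed hzAQ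
    have hu0 : (0:ℝ) < u := by
      have := hAu 0 h0AQ
      simpa using this
    have hpol : ∀ w ∈ AQ, ℵ w ≤ 0 := by
      intro w hw
      by_contra hne
      push_neg at hne
      have hbig := hAu _ (hAQsmul ((u + 1) / (ℵ w)) (by positivity) w hw)
      rw [map_smul, smul_eq_mul, div_mul_cancel₀ _ (ne_of_gt hne)] at hbig
      linarith
    have hmem : ℵ ∈ {ℵ' : StrongDual ℝ (StrongDual ℝ (StrongDual ℝ X)) | ∀ w ∈ AQ, ℵ' w ≤ 0} := hpol
    rw [← claimA, h4, claimB] at hmem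
    have := hmem z hz
    linarith
  -- assembly
  refine ⟨⟨⟨h12, h21⟩, ⟨h23, h32⟩, ⟨fun h3 => h24 (h32 h3), fun h4 => h23 (h42 h4)⟩⟩, hmoreover⟩
end
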